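/- In the quotient ring ℚ[χ]/⟨1+χ+⋯+χ^{N-1}⟩ with N = 2^K, for any odd natural number k the element 1-χ^k is invertible, with inverse -(1/N)·(1 + 2χ^k + 3χ^{2k} + ⋯ + N·χ^{(N-1)k}). -/

import Mathlib

open Polynomial

lemma aux_telescope {R : Type*} [CommRing R] (y : R) (n : ℕ) :
    (1 - y) * ∑ j ∈ Finset.range n, ((j : R) + 1) * y ^ j
      = (∑ j ∈ Finset.range n, y ^ j) - (n : R) * y ^ n := by
  induction n with
  | zero => simp
  | succ n ih =>
    rw [Finset.sum_range_succ, Finset.sum_range_succ (f := fun j => y ^ j), mul_add, ih]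
    push_cast
    ring

/-- In ℚ[χ]/⟨1+χ+⋯+χ^{N-1}⟩ with N = 2^K and k odd, 1-χ^k is invertible with inverse
-(1/N)·(1 + 2χ^k + 3χ^{2k} + ⋯ + N·χ^{(N-1)k}). -/
theorem stmt0 (K : ℕ) (hK : 1 ≤ K) (k : ℕ) (hk : Odd k) :
    (Ideal.Quotient.mk (Ideal.span {(∑ i ∈ Finset.range (2 ^ K), X ^ i : Polynomial ℚ)})
        (1 - X ^ k)) *
      (Ideal.Quotient.mk (Ideal.span {(∑ i ∈ Finset.range (2 ^ K), X ^ i : Polynomial ℚ)})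
        (C (-(1 / ((2 ^ K : ℕ) : ℚ))) *
          ∑ j ∈ Finset.range (2 ^ K), C ((j : ℚ) + 1) * X ^ (j * k))) = 1 := by
  set N : ℕ := 2 ^ K with hN
  have hN1 : 1 < N := Nat.one_lt_two_pow_iff.mpr (by omega)
  have hN0 : 0 < N := by omega
  set S : Polynomial ℚ := ∑ i ∈ Finset.range N, X ^ i with hSdef
  set φ := Ideal.Quotient.mk (Ideal.span {S}) with hφ
  have hS0 : φ S = 0 :=
    Ideal.Quotient.eq_zero_iff_mem.mpr (Ideal.subset_span rfl)
  set x : Polynomial ℚ ⧸ Ideal.span {S} := φ X with hxdef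
  -- x ^ N = 1
  have hxN : x ^ N = 1 := by
    have h : (S * (X - 1) : Polynomial ℚ) = X ^ N - 1 := geom_sum_mul X N
    have h2 : x ^ N - 1 = 0 := by
      have := congrArg φ h
      simpa [map_mul, map_sub, map_pow, map_one, hS0] using this.symm
    linear_combination h2
  have hpow : ∀ m, x ^ m = x ^ (m % N) := by
    intro m
    conv_lhs => rw [← Nat.div_add_mod m N, pow_add, pow_mul, hxN, one_pow, one_mul]
  -- sum of powers is 0
  have hsum0 : ∑ i ∈ Finset.range N, x ^ i = 0 := by
    rw [← hS0]
    show _ = φ (∑ i ∈ Finset.range N, X ^ i)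
    simp [map_sum, map_pow, hxdef]
  -- coprimality and inverse mod N
  have hcop : Nat.Coprime k N := by
    exact Nat.Coprime.pow_right K (Odd.coprime_two_right hk)
  obtain ⟨k', -, hk'⟩ := Nat.exists_mul_mod_eq_one_of_coprime hcop hN1
  -- permuted sum of powers is 0
  have hsumk : ∑ j ∈ Finset.range N, x ^ (j * k) = 0 := by
    rw [← hsum0]
    apply Finset.sum_nbij' (i := fun j => j * k % N) (j := fun i => i * k' % N)
    · intro a ha; exact Finset.mem_range.mpr (Nat.mod_lt _ hN0)
    · intro a ha; exact Finset.mem_range.mpr (Nat.mod_lt _ hN0)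
    · intro a ha
      have ha' : a < N := Finset.mem_range.mp ha
      calc a * k % N * k' % N = a * k * k' % N := by rw [Nat.mod_mul_mod]
        _ = a % N * (k * k' % N) % N := by rw [mul_assoc, Nat.mul_mod]
        _ = a := by rw [hk']; simp [Nat.mod_eq_of_lt ha']
    · intro a ha
      have ha' : a < N := Finset.mem_range.mp ha
      calc a * k' % N * k % N = a * k' * k % N := by rw [Nat.mod_mul_mod]
        _ = a % N * (k * k' % N) % N := by rw [mul_assoc, mul_comm k' k, Nat.mul_mod]
        _ = a := by rw [hk']; simp [Nat.mod_eq_of_lt ha']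
    · intro a ha
      exact hpow (a * k)
  -- main computation
  have hmap : φ (∑ j ∈ Finset.range N, C ((j : ℚ) + 1) * X ^ (j * k))
      = ∑ j ∈ Finset.range N, ((j : Polynomial ℚ ⧸ Ideal.span {S}) + 1) * (x ^ k) ^ j := by
    rw [map_sum]
    refine Finset.sum_congr rfl fun j hj => ?_
    rw [map_mul, map_pow, ← pow_mul, mul_comm k j]
    congr 1
    simp
  have htele := aux_telescope (x ^ k) N
  have hsumk' : ∑ j ∈ Finset.range N, (x ^ k) ^ j = 0 := by
    rw [← hsumk]
    refine Finset.sum_congr rfl fun j hj => ?_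
    rw [← pow_mul, mul_comm k j]
  have hyN : (x ^ k) ^ N = 1 := by
    rw [← pow_mul, mul_comm, pow_mul, hxN, one_pow]
  have key : φ (1 - X ^ k) * φ (∑ j ∈ Finset.range N, C ((j : ℚ) + 1) * X ^ (j * k))
      = -(N : Polynomial ℚ ⧸ Ideal.span {S}) := by
    have h1 : φ (1 - X ^ k) = 1 - x ^ k := by rw [map_sub, map_one, map_pow]
    rw [h1, hmap, htele, hsumk', hyN, mul_one, zero_sub]
  have hCN : ((N : ℕ) : Polynomial ℚ ⧸ Ideal.span {S}) = φ (C ((N : ℕ) : ℚ)) := by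
    simp [map_natCast]
  rw [map_mul φ, ← mul_assoc, mul_comm (φ (1 - X ^ k)) (φ (C (-(1 / ((N : ℕ) : ℚ))))),
    mul_assoc, key]
  erw [mul_neg]
  rw [hCN, ← map_mul φ, ← C_mul]
  have hc : (-(1 / ((N : ℕ) : ℚ))) * ((N : ℕ) : ℚ) = -1 := by
    have : ((N : ℕ) : ℚ) ≠ 0 := by positivity
    field_simp
  rw [hc]
  simp
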